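/- Determinism of the refined system on the post-erasure suffix: let S be deterministic and input erasing, and suppose S(I) has trace t·(a!BE)(a?v)·u·(a!EE) reaching state s3, and S(I') (with I' differing from I only at the position of v) has trace t·(a!BE)(a?w)·u'·(a!EE) reaching state s3'. Then for any input-free trace z, s3 can perform z iff s3' can perform z. -/

import Mathlib

inductive Reaches {St L : Type} (tr : St → L → St → Prop) : St → List L → St → Prop
  | nil (s : St) : Reaches tr s [] s
  | cons {s s' s'' : St} {l : L} {t : List L} :
      tr s l s' → Reaches tr s' t s'' → Reaches tr s (l :: t) s''

inductive SysLabel (V : Type) where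
  | out (v : V)
  | inp (v : V)
  | beginE
  | endE
  | outB (v : V)

def SysLabel.isInp {V : Type} : SysLabel V → Bool
  | .inp _ => true
  | _ => false

/-- number of input labels `a?v` in a trace (the operator `i(t)`) -/
def icount {V : Type} (t : List (SysLabel V)) : ℕ := t.countP SysLabel.isInp

/-- the sequence of input values occurring in a trace -/
def inputsOf {V : Type} (t : List (SysLabel V)) : List V :=
  t.filterMap fun l => match l with | .inp v => some v | _ => none

/-- A system is deterministic: distinct labels from a state are both inputs,
and each label leads to at most one state. -/
def SysDet {St V : Type} (tr : St → SysLabel V → St → Prop) : Prop :=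
  (∀ s l₁ l₂ s₁ s₂, tr s l₁ s₁ → tr s l₂ s₂ → l₁ ≠ l₂ →
     ∃ v₁ v₂, l₁ = SysLabel.inp v₁ ∧ l₂ = SysLabel.inp v₂) ∧
  (∀ s l s₁ s₂, tr s l s₁ → tr s l s₂ → s₁ = s₂)

def countEEs {V : Type} (t : List (SysLabel V)) : ℕ :=
  t.countP fun l => match l with | .endE => true | _ => false

def countBEs {V : Type} (t : List (SysLabel V)) : ℕ :=
  t.countP fun l => match l with | .beginE => true | _ => false

/-- count of occurrences of the erasure-input pattern `(a!BE)(a?v)` -/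
def countBEIn {V : Type} : List (SysLabel V) → ℕ
  | .beginE :: .inp _ :: rest => countBEIn rest + 1
  | _ :: rest => countBEIn rest
  | [] => 0

/-- Well-formed system: BE is always followed by input-enabledness, and
BE/EE events are well bracketed. -/
def WellFormedSys {St V : Type} (tr : St → SysLabel V → St → Prop) (s0 : St) : Prop :=
  (∀ t s, Reaches tr s0 (t ++ [SysLabel.beginE]) s → ∀ v : V, ∃ s', tr s (SysLabel.inp v) s') ∧
  (∀ t s, Reaches tr s0 t s → ∀ t', t' <+: t → countEEs t' ≤ countBEIn t') ∧
  (∀ t s, Reaches tr s0 t s → (∀ l s', ¬ tr s l s') → countEEs t = countBEIn t)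

/-- `t` is a trace of the refinement `S(I)` (stream indexed from 0). -/
def InstTrace {St V : Type} (tr : St → SysLabel V → St → Prop) (s0 : St) (I : ℕ → V)
    (t : List (SysLabel V)) : Prop :=
  (∃ s, Reaches tr s0 t s) ∧
  ∀ n (h : n < (inputsOf t).length), (inputsOf t).get ⟨n, h⟩ = I n

/-- the BE/EE events inside a session body are balanced (so the closing EE matches
the opening BE). -/
def BalancedSys {V : Type} (u : List (SysLabel V)) : Prop :=
  countBEs u = countEEs u ∧ ∀ p, p <+: u → countEEs p ≤ countBEs p

/-- Abstract input erasure `E(S)`. -/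
def InputErasing {St V : Type} (tr : St → SysLabel V → St → Prop) (s0 : St) : Prop :=
  ∀ (I : ℕ → V) (t u z : List (SysLabel V)) (v : V),
    InstTrace tr s0 I (t ++ SysLabel.beginE :: SysLabel.inp v :: u ++ SysLabel.endE :: z) →
    BalancedSys u →
    ∀ I' : ℕ → V, (∀ m, m ≠ icount t → I m = I' m) →
      ∃ u', InstTrace tr s0 I'
          (t ++ SysLabel.beginE :: SysLabel.inp (I' (icount t)) :: u' ++ SysLabel.endE :: z) ∧
        BalancedSys u' ∧ icount u = icount u'

/-- a trace containing no input labels -/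
def InputFree {V : Type} (t : List (SysLabel V)) : Prop :=
  ∀ l ∈ t, ∀ v : V, l ≠ SysLabel.inp v


section Aux

variable {St V : Type} {tr : St → SysLabel V → St → Prop}

lemma reaches_append_split {s s'' : St} {p q : List (SysLabel V)}
    (h : Reaches tr s (p ++ q) s'') : ∃ m, Reaches tr s p m ∧ Reaches tr m q s'' := by
  induction p generalizing s with
  | nil => exact ⟨s, .nil s, h⟩
  | cons l p ih =>
    cases h with
    | cons h1 h2 =>
      obtain ⟨m, hm1, hm2⟩ := ih h2
      exact ⟨m, .cons h1 hm1, hm2⟩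

lemma reaches_append_of {s m s'' : St} {p q : List (SysLabel V)}
    (h1 : Reaches tr s p m) (h2 : Reaches tr m q s'') : Reaches tr s (p ++ q) s'' := by
  induction h1 with
  | nil => exact h2
  | cons h _ ih => exact .cons h (ih h2)

lemma det_states (hdet : SysDet tr) {s : St} {p : List (SysLabel V)} {s₁ s₂ : St}
    (h1 : Reaches tr s p s₁) (h2 : Reaches tr s p s₂) : s₁ = s₂ := by
  induction h1 generalizing s₂ with
  | nil => cases h2; rfl
  | cons h hr ih =>
    cases h2 with
    | cons h' hr' =>
      cases hdet.2 _ _ _ _ h h'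
      exact ih hr'

lemma inputsOf_append (a b : List (SysLabel V)) :
    inputsOf (a ++ b) = inputsOf a ++ inputsOf b :=
  List.filterMap_append

lemma inputsOf_nil_of_inputFree {z : List (SysLabel V)} (hz : InputFree z) :
    inputsOf z = [] := by
  induction z with
  | nil => rfl
  | cons l z ih =>
    have ih' := ih (fun l' hl' => hz l' (by simp [hl']))
    cases l with
    | inp v => exact absurd rfl (hz (.inp v) (by simp) v)
    | out v => simpa [inputsOf, List.filterMap_cons] using ih'
    | beginE => simpa [inputsOf, List.filterMap_cons] using ih'
    | endE => simpa [inputsOf, List.filterMap_cons] using ih'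
    | outB v => simpa [inputsOf, List.filterMap_cons] using ih'

lemma length_inputsOf (t : List (SysLabel V)) : (inputsOf t).length = icount t := by
  induction t with
  | nil => rfl
  | cons l t ih =>
    cases l <;>
      simp [inputsOf, icount, List.filterMap_cons, List.countP_cons, SysLabel.isInp] at * <;>
      omega

lemma countEEs_append (a b : List (SysLabel V)) :
    countEEs (a ++ b) = countEEs a + countEEs b :=
  List.countP_append

lemma countBEs_append (a b : List (SysLabel V)) :
    countBEs (a ++ b) = countBEs a + countBEs b :=
  List.countP_append

lemma countEEs_singleton_EE : countEEs ([SysLabel.endE] : List (SysLabel V)) = 1 := by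
  simp [countEEs, List.countP_cons]

lemma countBEs_singleton_EE : countBEs ([SysLabel.endE] : List (SysLabel V)) = 0 := by
  simp [countBEs, List.countP_cons]

lemma follows_tail {F : ℕ → V} {k : ℕ} {v : V} {xs : List V}
    (h : ∀ n hn, (v :: xs).get ⟨n, hn⟩ = F (k + n)) :
    ∀ n hn, xs.get ⟨n, hn⟩ = F ((k + 1) + n) := by
  intro n hn
  have h' := h (n + 1) (by simpa using Nat.succ_lt_succ hn)
  have e : k + (n + 1) = (k + 1) + n := by omega
  rw [e] at h'
  simpa using h'

lemma comparable (hdet : SysDet tr) (F : ℕ → V) :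
    ∀ (p q : List (SysLabel V)) (s s₁ s₂ : St) (k : ℕ),
      Reaches tr s p s₁ → Reaches tr s q s₂ →
      (∀ n h, (inputsOf p).get ⟨n, h⟩ = F (k + n)) →
      (∀ n h, (inputsOf q).get ⟨n, h⟩ = F (k + n)) →
      p <+: q ∨ q <+: p := by
  intro p
  induction p with
  | nil => intro q s s₁ s₂ k _ _ _ _; exact Or.inl List.nil_prefix
  | cons l p ih =>
    intro q s s₁ s₂ k hp hq hpc hqc
    cases q with
    | nil => exact Or.inr List.nil_prefix
    | cons l' q =>
      cases hp with | cons hl hp' =>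
      cases hq with | cons hl' hq' =>
      rename_i s' s''
      have hll : l = l' := by
        by_contra hne
        obtain ⟨v₁, v₂, rfl, rfl⟩ := hdet.1 _ _ _ _ _ hl hl' hne
        have h1 : v₁ = F (k + 0) := by
          have := hpc 0 (by simp [inputsOf, List.filterMap_cons])
          simpa [inputsOf, List.filterMap_cons] using this
        have h2 : v₂ = F (k + 0) := by
          have := hqc 0 (by simp [inputsOf, List.filterMap_cons])
          simpa [inputsOf, List.filterMap_cons] using this
        exact hne (by rw [h1, h2])
      subst hll
      cases hdet.2 _ _ _ _ hl hl'
      have hrest : p <+: q ∨ q <+: p := by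
        cases l with
        | inp v =>
          have hpc' : ∀ n h, (inputsOf p).get ⟨n, h⟩ = F ((k + 1) + n) := by
            have hpc2 : ∀ n hn, ((v :: inputsOf p)).get ⟨n, hn⟩ = F (k + n) := by
              intro n hn
              have e : inputsOf (SysLabel.inp v :: p) = v :: inputsOf p := by
                simp [inputsOf, List.filterMap_cons]
              rw [e] at hpc
              exact hpc n hn
            exact follows_tail hpc2
          have hqc' : ∀ n h, (inputsOf q).get ⟨n, h⟩ = F ((k + 1) + n) := by
            have hqc2 : ∀ n hn, ((v :: inputsOf q)).get ⟨n, hn⟩ = F (k + n) := by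
              intro n hn
              have e : inputsOf (SysLabel.inp v :: q) = v :: inputsOf q := by
                simp [inputsOf, List.filterMap_cons]
              rw [e] at hqc
              exact hqc n hn
            exact follows_tail hqc2
          exact ih q _ _ _ (k + 1) hp' hq' hpc' hqc'
        | out v =>
          have ep : inputsOf (SysLabel.out v :: p) = inputsOf p := by
            simp [inputsOf, List.filterMap_cons]
          have eq' : inputsOf (SysLabel.out v :: q) = inputsOf q := by
            simp [inputsOf, List.filterMap_cons]
          rw [ep] at hpc; rw [eq'] at hqc
          exact ih q _ _ _ k hp' hq' hpc hqc
        | beginE =>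
          have ep : inputsOf (SysLabel.beginE :: p) = inputsOf p := by
            simp [inputsOf, List.filterMap_cons]
          have eq' : inputsOf (SysLabel.beginE :: q) = inputsOf q := by
            simp [inputsOf, List.filterMap_cons]
          rw [ep] at hpc; rw [eq'] at hqc
          exact ih q _ _ _ k hp' hq' hpc hqc
        | endE =>
          have ep : inputsOf (SysLabel.endE :: p) = inputsOf p := by
            simp [inputsOf, List.filterMap_cons]
          have eq' : inputsOf (SysLabel.endE :: q) = inputsOf q := by
            simp [inputsOf, List.filterMap_cons]
          rw [ep] at hpc; rw [eq'] at hqc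
          exact ih q _ _ _ k hp' hq' hpc hqc
        | outB v =>
          have ep : inputsOf (SysLabel.outB v :: p) = inputsOf p := by
            simp [inputsOf, List.filterMap_cons]
          have eq' : inputsOf (SysLabel.outB v :: q) = inputsOf q := by
            simp [inputsOf, List.filterMap_cons]
          rw [ep] at hpc; rw [eq'] at hqc
          exact ih q _ _ _ k hp' hq' hpc hqc
      rcases hrest with h | h
      · exact Or.inl (List.cons_prefix_cons.mpr ⟨rfl, h⟩)
      · exact Or.inr (List.cons_prefix_cons.mpr ⟨rfl, h⟩)

lemma bal_eq {u₁ u₂ : List (SysLabel V)} (h1 : BalancedSys u₁) (h2 : BalancedSys u₂)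
    (hp : u₁ ++ [SysLabel.endE] <+: u₂ ++ [SysLabel.endE]) : u₁ = u₂ := by
  have hlen : u₁.length + 1 ≤ u₂.length + 1 := by simpa using hp.length_le
  rcases lt_or_eq_of_le (Nat.le_of_succ_le_succ hlen) with hlt | heq
  · exfalso
    have hpre : u₁ ++ [SysLabel.endE] <+: u₂ :=
      List.prefix_of_prefix_length_le hp (List.prefix_append _ _) (by simpa using hlt)
    have := h2.2 _ hpre
    rw [countEEs_append, countBEs_append, countEEs_singleton_EE, countBEs_singleton_EE] at this
    have hb := h1.1
    omega
  · have := List.IsPrefix.eq_of_length hp (by simpa using heq)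
    exact List.append_cancel_right this

lemma one_dir {St V : Type} {tr : St → SysLabel V → St → Prop} {s0 : St}
    (hdet : SysDet tr) (hE : InputErasing tr s0)
    (I I' : ℕ → V) (t u u' : List (SysLabel V)) (v w : V) (s₃ s₃' : St)
    (h1 : InstTrace tr s0 I (t ++ SysLabel.beginE :: SysLabel.inp v :: u ++ [SysLabel.endE]))
    (hr1 : Reaches tr s0 (t ++ SysLabel.beginE :: SysLabel.inp v :: u ++ [SysLabel.endE]) s₃)
    (hbal : BalancedSys u)
    (h2 : InstTrace tr s0 I' (t ++ SysLabel.beginE :: SysLabel.inp w :: u' ++ [SysLabel.endE]))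
    (hr2 : Reaches tr s0 (t ++ SysLabel.beginE :: SysLabel.inp w :: u' ++ [SysLabel.endE]) s₃')
    (hbal' : BalancedSys u')
    (hdiff : ∀ m, m ≠ icount t → I m = I' m)
    (z : List (SysLabel V)) (hz : InputFree z) :
    (∃ y, Reaches tr s₃ z y) → ∃ y, Reaches tr s₃' z y := by
  rintro ⟨y, hy⟩
  have eq1 : (t ++ SysLabel.beginE :: SysLabel.inp v :: u ++ [SysLabel.endE]) ++ z
      = t ++ SysLabel.beginE :: SysLabel.inp v :: u ++ SysLabel.endE :: z := by simp
  have hT1z : Reaches tr s0 (t ++ SysLabel.beginE :: SysLabel.inp v :: u ++ SysLabel.endE :: z) y := by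
    rw [← eq1]; exact reaches_append_of hr1 hy
  have hinst : InstTrace tr s0 I (t ++ SysLabel.beginE :: SysLabel.inp v :: u ++ SysLabel.endE :: z) := by
    refine ⟨⟨y, hT1z⟩, ?_⟩
    have hz0 := inputsOf_nil_of_inputFree hz
    have einp : inputsOf (t ++ SysLabel.beginE :: SysLabel.inp v :: u ++ SysLabel.endE :: z)
        = inputsOf (t ++ SysLabel.beginE :: SysLabel.inp v :: u ++ [SysLabel.endE]) := by
      rw [← eq1, inputsOf_append, hz0, List.append_nil]
    intro n hn
    rw [List.get_of_eq einp ⟨n, hn⟩]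
    exact h1.2 n _
  obtain ⟨u₂, hinst', hbal₂, _⟩ := hE I t u z v hinst hbal I' hdiff
  -- identify the erased value with w
  have hw : I' (icount t) = w := by
    have e2 : inputsOf (t ++ SysLabel.beginE :: SysLabel.inp w :: u' ++ [SysLabel.endE])
        = inputsOf t ++ w :: inputsOf (u' ++ [SysLabel.endE]) := by
      rw [inputsOf_append]; simp [inputsOf, List.filterMap_cons]
    have hlen : (inputsOf t).length
        < (inputsOf (t ++ SysLabel.beginE :: SysLabel.inp w :: u' ++ [SysLabel.endE])).length := by
      rw [e2]; simp
    have hg := h2.2 (inputsOf t).length hlen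
    rw [List.get_of_eq e2] at hg
    have hg' : w = I' (inputsOf t).length := by
      simpa [List.get_eq_getElem, List.getElem_append_right, Nat.sub_self] using hg
    rw [← length_inputsOf]
    exact hg'.symm
  rw [hw] at hinst'
  obtain ⟨⟨se, hre⟩, hcons'⟩ := hinst'
  -- comparability of the two I'-traces
  have hcomp := comparable hdet I'
    (t ++ SysLabel.beginE :: SysLabel.inp w :: u' ++ [SysLabel.endE])
    (t ++ SysLabel.beginE :: SysLabel.inp w :: u₂ ++ SysLabel.endE :: z)
    s0 s₃' se 0 hr2 hre
    (fun n h => by simpa using h2.2 n h)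
    (fun n h => by simpa using hcons' n h)
  have eqA : t ++ SysLabel.beginE :: SysLabel.inp w :: u' ++ [SysLabel.endE]
      = (t ++ [SysLabel.beginE, SysLabel.inp w]) ++ (u' ++ [SysLabel.endE]) := by simp
  have eqB : t ++ SysLabel.beginE :: SysLabel.inp w :: u₂ ++ SysLabel.endE :: z
      = (t ++ [SysLabel.beginE, SysLabel.inp w]) ++ ((u₂ ++ [SysLabel.endE]) ++ z) := by simp
  rw [eqA, eqB, List.prefix_append_right_inj, List.prefix_append_right_inj] at hcomp
  have hu : u₂ = u' := by
    rcases hcomp with h | h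
    · rcases Nat.le_total (u'.length + 1) (u₂.length + 1) with hle | hle
      · have : u' ++ [SysLabel.endE] <+: u₂ ++ [SysLabel.endE] :=
          List.prefix_of_prefix_length_le h (List.prefix_append _ _) (by simpa using hle)
        exact (bal_eq hbal' hbal₂ this).symm
      · have : u₂ ++ [SysLabel.endE] <+: u' ++ [SysLabel.endE] :=
          List.prefix_of_prefix_length_le (List.prefix_append _ _) h (by simpa using hle)
        exact bal_eq hbal₂ hbal' this
    · have : u₂ ++ [SysLabel.endE] <+: u' ++ [SysLabel.endE] :=
        (List.prefix_append _ _).trans h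
      exact bal_eq hbal₂ hbal' this
  rw [hu] at hre
  have eqC : t ++ SysLabel.beginE :: SysLabel.inp w :: u' ++ SysLabel.endE :: z
      = (t ++ SysLabel.beginE :: SysLabel.inp w :: u' ++ [SysLabel.endE]) ++ z := by simp
  rw [eqC] at hre
  obtain ⟨m, hm1, hm2⟩ := reaches_append_split hre
  have hms : m = s₃' := det_states hdet hm1 hr2
  exact ⟨se, hms ▸ hm2⟩

end Aux

/-- After matched erasure sessions of S(I) and S(I') (streams differing only at
the erased input) the reached states can perform exactly the same input-free traces. -/
theorem post_erasure_inputfree_equiv {St V : Type}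
    (tr : St → SysLabel V → St → Prop) (s0 : St)
    (hdet : SysDet tr) (hwf : WellFormedSys tr s0) (hE : InputErasing tr s0)
    (I I' : ℕ → V) (t u u' : List (SysLabel V)) (v w : V) (s₃ s₃' : St)
    (h1 : InstTrace tr s0 I (t ++ SysLabel.beginE :: SysLabel.inp v :: u ++ [SysLabel.endE]))
    (hr1 : Reaches tr s0 (t ++ SysLabel.beginE :: SysLabel.inp v :: u ++ [SysLabel.endE]) s₃)
    (hbal : BalancedSys u)
    (h2 : InstTrace tr s0 I' (t ++ SysLabel.beginE :: SysLabel.inp w :: u' ++ [SysLabel.endE]))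
    (hr2 : Reaches tr s0 (t ++ SysLabel.beginE :: SysLabel.inp w :: u' ++ [SysLabel.endE]) s₃')
    (hbal' : BalancedSys u')
    (hdiff : ∀ m, m ≠ icount t → I m = I' m) :
    ∀ z : List (SysLabel V), InputFree z →
      ((∃ y, Reaches tr s₃ z y) ↔ (∃ y, Reaches tr s₃' z y)) := by
  intro z hz
  constructor
  · exact one_dir hdet hE I I' t u u' v w s₃ s₃' h1 hr1 hbal h2 hr2 hbal' hdiff z hz
  · exact one_dir hdet hE I' I t u' u w v s₃' s₃ h2 hr2 hbal' h1 hr1 hbal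
      (fun m hm => (hdiff m hm).symm) z hz
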